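/- With s = √ν, the mixed second derivative ∂²W/∂λ∂y(−1, s², 2s) equals 2s²(1−s)²(1 + 2s + 12s² − 18s³ − 13s⁴ − 8s⁵), and this is strictly positive for all s ∈ (0, 1/2) (equivalently ν ∈ (0, 1/4)). -/
import Mathlib


noncomputable def Wly (v l : ℝ) : ℝ :=
  2*v*(1 - 3*v - v^2 + 3*v^3 - 4*v*(1 + v^2)*l + 3*(1 + 3*v)*l^2 - 4*l^3)

theorem stmt12 (s : ℝ) :
    Wly (s^2) (2*s)
      = 2*s^2*(1 - s)^2*(1 + 2*s + 12*s^2 - 18*s^3 - 13*s^4 - 8*s^5) ∧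
    (0 < s → s < 1/2 → 0 < Wly (s^2) (2*s)) := by
  constructor
  · unfold Wly; ring
  · intro hs hs2
    have heq : Wly (s^2) (2*s)
        = 2*s^2*(1 - s)^2*(1 + 2*s + 12*s^2 - 18*s^3 - 13*s^4 - 8*s^5) := by
      unfold Wly; ring
    rw [heq]
    have hpoly : 0 < 1 + 2*s + 12*s^2 - 18*s^3 - 13*s^4 - 8*s^5 := by
      nlinarith [sq_nonneg s, sq_nonneg (1-2*s), mul_pos hs hs, mul_pos (mul_pos hs hs) hs,
        mul_pos (mul_pos (mul_pos hs hs) hs) hs, sq_nonneg (s*(1-2*s)), sq_nonneg (s^2*(1-2*s))]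
    have h1 : (0:ℝ) < (1-s)^2 := by nlinarith
    have h2 : (0:ℝ) < 2*s^2 := by positivity
    exact mul_pos (mul_pos h2 h1) hpoly
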